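/- Deterministic prediction bound (core of Theorem 1): under the same hypotheses as the deterministic ℓ2 estimation bound — β̂ a global minimizer of L(β) + λ‖β‖₁ with λ > 0, β* supported on S with |S| = s ≥ 1, λ ≥ 2‖ξ‖_∞, restricted strong convexity Δᵀ G Δ ≥ α‖Δ‖₂² − κ‖Δ‖₁² on the cone ‖Δ_{S^c}‖₁ ≤ 3‖Δ_S‖₁ with α > 0, κ ≥ 0, and 16 κ s ≤ α/2 — one has (1/N) ‖W̃^{1/2} X (β̂ − β*)‖₂² ≤ 18 λ² s / α, where W̃^{1/2} is the positive semidefinite square root of W̃. -/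

import Mathlib

open Matrix

open scoped ComplexOrder in
noncomputable def Matrix.PosSemidef.sqrt {n : Type*} [Fintype n] [DecidableEq n]
    {𝕜 : Type*} [RCLike 𝕜] {A : Matrix n n 𝕜} (hA : A.PosSemidef) : Matrix n n 𝕜 :=
  hA.1.eigenvectorUnitary.1 * diagonal ((↑) ∘ (Real.sqrt ∘ hA.1.eigenvalues)) *
  (star hA.1.eigenvectorUnitary : Matrix n n 𝕜)

lemma detpred_sqrt_herm {n : ℕ} {A : Matrix (Fin n) (Fin n) ℝ} (hA : A.PosSemidef) :
    hA.sqrt.IsHermitian := by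
  unfold Matrix.IsHermitian Matrix.PosSemidef.sqrt
  simp [star_eq_conjTranspose, conjTranspose_eq_transpose_of_trivial, Matrix.mul_assoc]

lemma detpred_sqrt_mul_self {n : ℕ} {A : Matrix (Fin n) (Fin n) ℝ} (hA : A.PosSemidef) :
    hA.sqrt * hA.sqrt = A := by
  unfold Matrix.PosSemidef.sqrt
  have hU : (star hA.1.eigenvectorUnitary : Matrix (Fin n) (Fin n) ℝ) * hA.1.eigenvectorUnitary.1 = 1 :=
    Unitary.star_mul_self_of_mem hA.1.eigenvectorUnitary.2
  conv_rhs => rw [hA.1.spectral_theorem]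
  simp only [Matrix.mul_assoc]
  rw [← Matrix.mul_assoc _ _ (diagonal _ * _), hU, Matrix.one_mul, ← Matrix.mul_assoc (diagonal _),
    diagonal_mul_diagonal, Unitary.conjStarAlgAut_apply, Matrix.mul_assoc]
  congr 3
  funext i
  simp [Real.mul_self_sqrt (hA.eigenvalues_nonneg i)]

set_option maxHeartbeats 1000000

lemma detpred_symdot {n : ℕ} (W : Matrix (Fin n) (Fin n) ℝ) (hW : Wᵀ = W) (a b : Fin n → ℝ) :
    a ⬝ᵥ (W *ᵥ b) = b ⬝ᵥ (W *ᵥ a) := by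
  rw [dotProduct_mulVec, ← hW, vecMul_transpose, dotProduct_comm, hW]

lemma detpred_tdot {N P : ℕ} (X : Matrix (Fin N) (Fin P) ℝ) (u : Fin N → ℝ) (d : Fin P → ℝ) :
    (Xᵀ *ᵥ u) ⬝ᵥ d = u ⬝ᵥ (X *ᵥ d) := by
  rw [← vecMul_transpose, ← dotProduct_mulVec, transpose_transpose]

lemma detpred_sqdot {n : ℕ} (S : Matrix (Fin n) (Fin n) ℝ) (hS : Sᵀ = S) (v : Fin n → ℝ) :
    (S *ᵥ v) ⬝ᵥ (S *ᵥ v) = v ⬝ᵥ ((S * S) *ᵥ v) := by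
  rw [← mulVec_mulVec, detpred_symdot S hS v (S *ᵥ v)]

/-- Deterministic prediction bound (core of Theorem 1 of the paper).
Let `L(β) = (1/(2N)) (Y − Xβ)ᵀ W̃ (Y − Xβ)` with score
`ξ = −(1/N) Xᵀ W̃ (Y − Xβ*)` and Gram matrix `G = (1/N) Xᵀ W̃ X`, and let `β̂`
be a global minimizer of `Q(β) = L(β) + λ‖β‖₁`.  If `β*` is supported on `S`
with `|S| = s ≥ 1`, `λ ≥ 2‖ξ‖_∞`, restricted strong convexity
`Δᵀ G Δ ≥ α‖Δ‖₂² − κ‖Δ‖₁²` holds on the cone `‖Δ_{S^c}‖₁ ≤ 3‖Δ_S‖₁` with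
`α > 0`, `κ ≥ 0`, and `16κs ≤ α/2`, then `(1/N)‖W̃^{1/2} X (β̂ − β*)‖₂² ≤ 18λ²s/α`, where `W̃^{1/2}` is the
positive semidefinite square root of `W̃`.
(The sup norm `‖ξ‖` below is the norm of the Pi type `Fin p → ℝ`.) -/
theorem deterministic_prediction_bound (N p s : ℕ) (hN : 0 < N) (hp : 0 < p)
    (X : Matrix (Fin N) (Fin p) ℝ)
    (Wt : Matrix (Fin N) (Fin N) ℝ) (hWt : Wt.PosSemidef)
    (Y : Fin N → ℝ) (βstar : Fin p → ℝ)
    (L : (Fin p → ℝ) → ℝ)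
    (hL : ∀ β, L β = (1 / (2 * (N : ℝ))) *
      ((Y - X *ᵥ β) ⬝ᵥ (Wt *ᵥ (Y - X *ᵥ β))))
    (ξ : Fin p → ℝ)
    (hξ : ξ = (-(1 / (N : ℝ))) • (Xᵀ *ᵥ (Wt *ᵥ (Y - X *ᵥ βstar))))
    (G : Matrix (Fin p) (Fin p) ℝ)
    (hG : G = (1 / (N : ℝ)) • (Xᵀ * Wt * X))
    (S : Finset (Fin p)) (hcard : S.card = s) (hs : 1 ≤ s)
    (hsupp : ∀ j ∉ S, βstar j = 0)
    (lam α κ : ℝ) (hlam : 0 < lam) (hα : 0 < α) (hκ : 0 ≤ κ)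
    (hlamξ : 2 * ‖ξ‖ ≤ lam)
    (hRSC : ∀ Δ : Fin p → ℝ, (∑ j ∈ Sᶜ, |Δ j|) ≤ 3 * (∑ j ∈ S, |Δ j|) →
      α * (∑ j, (Δ j) ^ 2) - κ * (∑ j, |Δ j|) ^ 2 ≤ Δ ⬝ᵥ (G *ᵥ Δ))
    (hκs : 16 * κ * s ≤ α / 2)
    (βhat : Fin p → ℝ)
    (hmin : ∀ β : Fin p → ℝ,
      L βhat + lam * (∑ j, |βhat j|) ≤ L β + lam * (∑ j, |β j|)) :
    (1 / (N : ℝ)) * (∑ i, ((hWt.sqrt *ᵥ (X *ᵥ (βhat - βstar))) i) ^ 2) ≤ 18 * lam ^ 2 * s / α := by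
  have hNpos : (0:ℝ) < N := by exact_mod_cast hN
  have hNne : (N:ℝ) ≠ 0 := hNpos.ne'
  have hWsym : Wtᵀ = Wt := by
    have := hWt.1
    rwa [Matrix.IsHermitian, conjTranspose_eq_transpose_of_trivial] at this
  set Δ : Fin p → ℝ := βhat - βstar with hΔdef
  have hΔ : ∀ j, Δ j = βhat j - βstar j := fun j => rfl
  set v : Fin N → ℝ := X *ᵥ Δ with hv
  set r : Fin N → ℝ := Y - X *ᵥ βstar with hr
  set q : ℝ := Δ ⬝ᵥ (G *ᵥ Δ) with hqdef
  -- quadratic form identity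
  have hq : q = (1/(N:ℝ)) * (v ⬝ᵥ (Wt *ᵥ v)) := by
    rw [hqdef, hG, smul_mulVec, dotProduct_smul, smul_eq_mul]
    congr 1
    rw [Matrix.mul_assoc, ← mulVec_mulVec, ← mulVec_mulVec, dotProduct_comm,
      detpred_tdot, ← hv, dotProduct_comm]
  -- score identity
  have hξd : ξ ⬝ᵥ Δ = -((1/(N:ℝ)) * (v ⬝ᵥ (Wt *ᵥ r))) := by
    rw [hξ, smul_dotProduct, smul_eq_mul, detpred_tdot, ← hv, dotProduct_comm]
    ring
  -- residual identity
  have hYhat : Y - X *ᵥ βhat = r - v := by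
    funext i
    simp only [hr, hv, hΔdef, mulVec_sub, Pi.sub_apply]
    ring
  have hsymrv : r ⬝ᵥ (Wt *ᵥ v) = v ⬝ᵥ (Wt *ᵥ r) := detpred_symdot Wt hWsym r v
  -- expansion of the loss
  have hexp : L βhat = L βstar + q/2 + ξ ⬝ᵥ Δ := by
    rw [hL, hL, hYhat, hq, hξd, ← hr, mulVec_sub, sub_dotProduct, dotProduct_sub,
      dotProduct_sub, hsymrv]
    field_simp
    ring
  -- ℓ1 quantities
  set tS : ℝ := ∑ j ∈ S, |Δ j| with htSdef
  set tC : ℝ := ∑ j ∈ Sᶜ, |Δ j| with htCdef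
  set t : ℝ := ∑ j, |Δ j| with htdef
  set e : ℝ := ∑ j, (Δ j)^2 with hedef
  have ht : tS + tC = t := Finset.sum_add_sum_compl S _
  have htSnn : 0 ≤ tS := Finset.sum_nonneg fun j _ => abs_nonneg _
  have htCnn : 0 ≤ tC := Finset.sum_nonneg fun j _ => abs_nonneg _
  have htnn : 0 ≤ t := by linarith
  have henn : 0 ≤ e := Finset.sum_nonneg fun j _ => sq_nonneg _
  -- score bound
  have hξb : -(ξ ⬝ᵥ Δ) ≤ ‖ξ‖ * t := by
    have habs : |ξ ⬝ᵥ Δ| ≤ ‖ξ‖ * t := by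
      rw [dotProduct, htdef]
      calc |∑ j, ξ j * Δ j| ≤ ∑ j, |ξ j * Δ j| := Finset.abs_sum_le_sum_abs _ _
        _ ≤ ∑ j, ‖ξ‖ * |Δ j| := Finset.sum_le_sum fun j _ => by
            rw [abs_mul]
            exact mul_le_mul_of_nonneg_right
              (by simpa [Real.norm_eq_abs] using norm_le_pi_norm ξ j) (abs_nonneg _)
        _ = ‖ξ‖ * ∑ j, |Δ j| := by rw [Finset.mul_sum]
    linarith [neg_abs_le (ξ ⬝ᵥ Δ)]
  -- ℓ1 norm comparison
  have hβdiff : (∑ j, |βstar j|) - (∑ j, |βhat j|) ≤ tS - tC := by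
    have h1 : ∑ j, |βstar j| = ∑ j ∈ S, |βstar j| := by
      rw [← Finset.sum_add_sum_compl S fun j => |βstar j|]
      have hz : ∑ j ∈ Sᶜ, |βstar j| = 0 :=
        Finset.sum_eq_zero fun j hj => by rw [hsupp j (Finset.mem_compl.mp hj), abs_zero]
      rw [hz, add_zero]
    have h2 : ∑ j, |βhat j| = (∑ j ∈ S, |βhat j|) + tC := by
      rw [← Finset.sum_add_sum_compl S fun j => |βhat j|]
      congr 1
      exact Finset.sum_congr rfl fun j hj => by
        rw [hΔ j, hsupp j (Finset.mem_compl.mp hj), sub_zero]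
    have h3 : (∑ j ∈ S, |βstar j|) - (∑ j ∈ S, |βhat j|) ≤ tS := by
      rw [← Finset.sum_sub_distrib, htSdef]
      refine Finset.sum_le_sum fun j _ => ?_
      have := abs_sub_abs_le_abs_sub (βstar j) (βhat j)
      rw [abs_sub_comm] at this
      rw [hΔ j]
      linarith
    linarith [h1, h2, h3]
  -- basic inequality
  have hbasic := hmin βstar
  have hkey : q ≤ 3*lam*tS - lam*tC := by
    have k1 : lam * ((∑ j, |βstar j|) - (∑ j, |βhat j|)) ≤ lam * (tS - tC) :=
      mul_le_mul_of_nonneg_left hβdiff hlam.le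
    have k2 : ‖ξ‖ * t ≤ (lam/2) * t :=
      mul_le_mul_of_nonneg_right (by linarith) htnn
    rw [← ht] at k2 hξb
    linarith [hbasic, hexp, hξb, k1, k2]
  -- nonnegativity of q
  have hq0 : 0 ≤ q := by
    rw [hq]
    have := hWt.dotProduct_mulVec_nonneg v
    simp only [star_trivial] at this
    positivity
  -- cone condition
  have hcone : tC ≤ 3 * tS := by
    have hmul : lam * tC ≤ lam * (3 * tS) := by linarith [hkey, hq0]
    exact le_of_mul_le_mul_left hmul hlam
  -- RSC
  have hrsc : α * e - κ * t^2 ≤ q := hRSC Δ hcone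
  -- Cauchy-Schwarz on S
  have htS2 : tS^2 ≤ (s:ℝ) * e := by
    have c1 : tS^2 ≤ (S.card : ℝ) * ∑ j ∈ S, |Δ j|^2 := by
      exact sq_sum_le_card_mul_sum_sq
    have c2 : ∑ j ∈ S, |Δ j|^2 ≤ e := by
      simp only [sq_abs]
      exact Finset.sum_le_sum_of_subset_of_nonneg (Finset.subset_univ S)
        fun j _ _ => sq_nonneg _
    calc tS^2 ≤ (S.card : ℝ) * ∑ j ∈ S, |Δ j|^2 := c1
      _ ≤ (S.card : ℝ) * e := mul_le_mul_of_nonneg_left c2 (Nat.cast_nonneg _)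
      _ = (s:ℝ) * e := by rw [hcard]
  have ht4 : t ≤ 4 * tS := by linarith
  have ht2 : t^2 ≤ 16 * ((s:ℝ) * e) := by
    have c := mul_self_le_mul_self htnn ht4
    nlinarith [c, htS2]
  have hκt : κ * t^2 ≤ (α/2) * e := by
    have u1 : κ * t^2 ≤ κ * (16 * ((s:ℝ) * e)) := mul_le_mul_of_nonneg_left ht2 hκ
    have u2 : (16 * κ * (s:ℝ)) * e ≤ (α/2) * e := mul_le_mul_of_nonneg_right hκs henn
    linarith [u1, u2]
  have hhalf : (α/2) * e ≤ q := by linarith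
  have hq3 : q ≤ 3 * lam * tS := by linarith [hkey, mul_nonneg hlam.le htCnn]
  -- final bound on q
  have hqfin : q ≤ 18 * lam^2 * s / α := by
    rw [le_div_iff₀ hα]
    rcases eq_or_lt_of_le hq0 with hq0' | hqpos
    · rw [← hq0', zero_mul]
      positivity
    · have hsq : q^2 ≤ 9 * lam^2 * ((s:ℝ) * e) := by
        nlinarith [mul_self_le_mul_self hq0 hq3, htS2, sq_nonneg lam, htSnn, hlam.le]
      have hmain : (q * α) * q ≤ (18 * lam^2 * (s:ℝ)) * q := by
        have b1 := mul_le_mul_of_nonneg_left hsq hα.le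
        have b2 := mul_le_mul_of_nonneg_left hhalf
          (by positivity : (0:ℝ) ≤ 18 * lam^2 * (s:ℝ))
        linarith [b1, b2]
      exact le_of_mul_le_mul_right hmain hqpos
  -- rewrite the target as q
  have htarget : (1/(N:ℝ)) * (∑ i, ((hWt.sqrt *ᵥ v) i)^2) = q := by
    have hSsym : hWt.sqrtᵀ = hWt.sqrt := by
      have := detpred_sqrt_herm hWt
      rwa [Matrix.IsHermitian, conjTranspose_eq_transpose_of_trivial] at this
    have h1 : ∑ i, ((hWt.sqrt *ᵥ v) i)^2 = (hWt.sqrt *ᵥ v) ⬝ᵥ (hWt.sqrt *ᵥ v) := by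
      simp [dotProduct, sq]
    rw [h1, detpred_sqdot _ hSsym, detpred_sqrt_mul_self hWt, ← hq]
  rw [htarget]
  exact hqfin
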